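/- arXiv:2601.04850 — 11 statements merged into one kernel-verified Lean document; each statement's English description precedes it below -/
import Mathlib

section
/- Let m ≥ 1 and l ∈ ℕ, n ≥ 1, and suppose 0 < p_k < 1 for all l ≤ k ≤ l+n−1. Then ∑_{k=l}^{l+n−1} ∫_k^{k+1} ν^{m·t} · P_k · p_k^{t−k} · log(1/p_k) dt = ∑_{k=l}^{l+n−1} ν^{m·k} · P_k · (1 − ν^m · p_k) · log(p_k) / log(ν^m · p_k). (This is the m-th moment of ν^{T_x} restricted to the event {l ≤ T_x < l+n} under the constant force of mortality assumption.) -/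
open Real Finset intervalIntegral

lemma int_rpow_const (c : ℝ) (hc : 0 < c) (hc1 : c ≠ 1) (a : ℝ) :
    ∫ t in a..(a+1), c ^ t = (c ^ (a+1) - c ^ a) / Real.log c := by
  have hL : Real.log c ≠ 0 := Real.log_ne_zero_of_pos_of_ne_one hc hc1
  have h1 : ∀ t : ℝ, c ^ t = Real.exp (Real.log c * t) := by
    intro t; rw [Real.rpow_def_of_pos hc, mul_comm]
  simp_rw [h1]
  rw [intervalIntegral.integral_comp_mul_left (fun x => Real.exp x) hL]
  rw [integral_exp]
  simp only [smul_eq_mul]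
  field_simp

/-- m-th moment of ν^{T_x} restricted to {l ≤ T_x < l+n} under the
constant force of mortality assumption. -/
theorem net_single_premium_pure_endowment
    (p : ℕ → ℝ) (ν : ℝ) (hν : ν ∈ Set.Ioo (0 : ℝ) 1)
    (m l n : ℕ) (hm : 1 ≤ m) (hn : 1 ≤ n)
    (hp : ∀ k, l ≤ k → k < l + n → 0 < p k ∧ p k < 1) :
    ∑ k ∈ Finset.Ico l (l + n),
      ∫ t in (k : ℝ)..((k : ℝ) + 1),
        ν ^ ((m : ℝ) * t) *
          ((∏ i ∈ Finset.range k, p i) * p k ^ (t - (k : ℝ)) * Real.log (1 / p k))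
    = ∑ k ∈ Finset.Ico l (l + n),
        ν ^ ((m : ℝ) * (k : ℝ)) * (∏ i ∈ Finset.range k, p i) *
          (1 - ν ^ (m : ℝ) * p k) * Real.log (p k) / Real.log (ν ^ (m : ℝ) * p k) := by
  refine Finset.sum_congr rfl fun k hk => ?_
  rw [Finset.mem_Ico] at hk
  obtain ⟨hp0, hp1⟩ := hp k hk.1 hk.2
  have hν0 : (0:ℝ) < ν := hν.1
  have hνm : ν ^ (m : ℝ) < 1 := by
    apply Real.rpow_lt_one hν0.le hν.2
    exact_mod_cast Nat.pos_of_ne_zero (by omega)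
  have hνm0 : 0 < ν ^ (m : ℝ) := Real.rpow_pos_of_pos hν0 _
  set c : ℝ := ν ^ (m : ℝ) * p k with hc
  have hc0 : 0 < c := mul_pos hνm0 hp0
  have hc1 : c < 1 := by
    calc c < 1 * 1 := mul_lt_mul'' hνm hp1 hνm0.le hp0.le
         _ = 1 := by ring
  have key : ∀ t : ℝ, ν ^ ((m : ℝ) * t) *
      ((∏ i ∈ Finset.range k, p i) * p k ^ (t - (k : ℝ)) * Real.log (1 / p k)) =
      ((∏ i ∈ Finset.range k, p i) * Real.log (1 / p k) * p k ^ (-(k:ℝ))) * c ^ t := by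
    intro t
    rw [hc, Real.mul_rpow hνm0.le hp0.le, Real.rpow_mul hν0.le,
      show t - (k:ℝ) = t + (-(k:ℝ)) by ring, Real.rpow_add hp0]
    ring
  simp_rw [key]
  rw [intervalIntegral.integral_const_mul, int_rpow_const c hc0 hc1.ne]
  have hck : c ^ ((k:ℝ)) = ν ^ ((m:ℝ) * (k:ℝ)) * p k ^ ((k:ℝ)) := by
    rw [hc, Real.mul_rpow hνm0.le hp0.le, Real.rpow_mul hν0.le]
  have hpk : p k ^ (-(k:ℝ)) * p k ^ ((k:ℝ)) = 1 := by
    rw [← Real.rpow_add hp0]; simp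
  rw [Real.rpow_add hc0, Real.rpow_one, hck, Real.log_div one_ne_zero hp0.ne',
    Real.log_one, mul_div_assoc']
  rw [div_eq_div_iff (Real.log_ne_zero_of_pos_of_ne_one hc0 hc1.ne)
    (Real.log_ne_zero_of_pos_of_ne_one hc0 hc1.ne)]
  linear_combination ((∏ i ∈ Finset.range k, p i) * Real.log (p k) *
    ν ^ ((m:ℝ) * (k:ℝ)) * (1 - c) * Real.log c) * hpk
end

section
/- Let m ≥ 1 and l ∈ ℕ, n ≥ 1, and suppose 0 < p_k < 1 for all l ≤ k ≤ l+n−1. Then ∑_{k=l}^{l+n−1} ∫_k^{k+1} t^m · P_k · p_k^{t−k} · log(1/p_k) dt = ∑_{k=l}^{l+n−1} P_k · (Γ(m+1, k·log(1/p_k)) − Γ(m+1, (k+1)·log(1/p_k))) / (p_k^k · (log(1/p_k))^m). (This is the m-th moment of the future lifetime T_x restricted to {l ≤ T_x < l+n} under the constant force of mortality assumption.) -/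
open Real Finset MeasureTheory

/-- The upper incomplete gamma function Γ(a, x) = ∫_x^∞ t^{a−1} e^{−t} dt. -/
noncomputable def upperGamma (a x : ℝ) : ℝ :=
  ∫ t in Set.Ioi x, t ^ (a - 1) * Real.exp (-t)

lemma integrableOn_pow_exp (m : ℕ) {a : ℝ} (ha : 0 ≤ a) :
    IntegrableOn (fun t : ℝ => t ^ m * Real.exp (-t)) (Set.Ioi a) := by
  have h := Real.GammaIntegral_convergent (s := (m : ℝ) + 1) (by positivity)
  have h2 : IntegrableOn (fun t : ℝ => t ^ m * Real.exp (-t)) (Set.Ioi 0) := by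
    apply h.congr_fun ?_ measurableSet_Ioi
    intro t ht
    simp only [Set.mem_Ioi] at ht
    show Real.exp (-t) * t ^ ((m:ℝ) + 1 - 1) = t ^ m * Real.exp (-t)
    rw [add_sub_cancel_right, Real.rpow_natCast, mul_comm]
  exact h2.mono_set (Set.Ioi_subset_Ioi ha)

lemma upperGamma_sub (m : ℕ) {a b : ℝ} (ha : 0 ≤ a) (hab : a ≤ b) :
    upperGamma ((m : ℝ) + 1) a - upperGamma ((m : ℝ) + 1) b
      = ∫ t in a..b, t ^ m * Real.exp (-t) := by
  have hb : (0:ℝ) ≤ b := le_trans ha hab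
  have key : ∀ c : ℝ, 0 ≤ c → upperGamma ((m : ℝ) + 1) c
      = ∫ t in Set.Ioi c, t ^ m * Real.exp (-t) := by
    intro c hc
    unfold upperGamma
    apply setIntegral_congr_fun measurableSet_Ioi
    intro t ht
    simp only [Set.mem_Ioi] at ht
    show t ^ ((m:ℝ) + 1 - 1) * Real.exp (-t) = t ^ m * Real.exp (-t)
    rw [add_sub_cancel_right, Real.rpow_natCast]
  rw [key a ha, key b hb]
  have hsplit : (∫ t in Set.Ioi a, t ^ m * Real.exp (-t))
      = (∫ t in Set.Ioc a b, t ^ m * Real.exp (-t))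
        + ∫ t in Set.Ioi b, t ^ m * Real.exp (-t) := by
    rw [← Set.Ioc_union_Ioi_eq_Ioi hab]
    exact setIntegral_union Set.Ioc_disjoint_Ioi_same measurableSet_Ioi
      ((integrableOn_pow_exp m ha).mono_set Set.Ioc_subset_Ioi_self)
      ((integrableOn_pow_exp m ha).mono_set (Set.Ioi_subset_Ioi hab))
  rw [hsplit, intervalIntegral.integral_of_le hab]
  ring

lemma key_integral (p : ℝ) (hp0 : 0 < p) (hp1 : p < 1) (m k : ℕ) :
    (∫ t in (k : ℝ)..((k : ℝ) + 1),
        t ^ m * (p ^ (t - (k : ℝ)) * Real.log (1 / p)))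
    = (upperGamma ((m : ℝ) + 1) ((k : ℝ) * Real.log (1 / p)) -
          upperGamma ((m : ℝ) + 1) (((k : ℝ) + 1) * Real.log (1 / p))) /
        (p ^ k * Real.log (1 / p) ^ m) := by
  set L : ℝ := Real.log (1 / p) with hLdef
  have hL : 0 < L := Real.log_pos (one_lt_one_div hp0 hp1)
  have hlogp : Real.log p = -L := by
    rw [hLdef, one_div, Real.log_inv, neg_neg]
  have hk0 : (0:ℝ) ≤ (k : ℝ) * L := by positivity
  have hkk : (k : ℝ) * L ≤ ((k : ℝ) + 1) * L := by nlinarith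
  rw [upperGamma_sub m hk0 hkk]
  -- rewrite the integrand
  have hintg : (∫ t in (k : ℝ)..((k : ℝ) + 1),
        t ^ m * (p ^ (t - (k : ℝ)) * L))
      = (p ^ k * L ^ m)⁻¹ * (L • ∫ t in (k : ℝ)..((k : ℝ) + 1),
          ((L * t) ^ m * Real.exp (-(L * t)))) := by
    rw [← intervalIntegral.integral_smul, ← intervalIntegral.integral_const_mul]
    apply intervalIntegral.integral_congr
    intro t _
    have hrpow : p ^ (t - (k : ℝ)) = Real.exp (-(L * t)) * Real.exp (L * (k : ℝ)) := by
      rw [Real.rpow_def_of_pos hp0, hlogp, ← Real.exp_add]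
      ring_nf
    have hek : Real.exp (L * (k : ℝ)) = (p ^ k)⁻¹ := by
      have h3 : L * (k : ℝ) = -Real.log (p ^ k) := by
        rw [Real.log_pow, hlogp]; push_cast; ring
      rw [h3, Real.exp_neg, Real.exp_log (by positivity)]
    simp only [smul_eq_mul]
    rw [hrpow, hek, mul_pow]
    have hpk : (p:ℝ) ^ k ≠ 0 := by positivity
    have hLm : (L:ℝ) ^ m ≠ 0 := by positivity
    field_simp
  rw [hintg, intervalIntegral.smul_integral_comp_mul_left
    (fun u => u ^ m * Real.exp (-u)) L]
  rw [div_eq_inv_mul, mul_comm L ((k:ℝ)), mul_comm L ((k:ℝ)+1)]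

/-- m-th moment of the future lifetime T_x restricted to
{l ≤ T_x < l+n} under the constant force of mortality assumption. -/
theorem moment_future_lifetime
    (p : ℕ → ℝ) (m l n : ℕ) (hm : 1 ≤ m) (hn : 1 ≤ n)
    (hp : ∀ k, l ≤ k → k < l + n → 0 < p k ∧ p k < 1) :
    ∑ k ∈ Finset.Ico l (l + n),
      ∫ t in (k : ℝ)..((k : ℝ) + 1),
        t ^ m *
          ((∏ i ∈ Finset.range k, p i) * p k ^ (t - (k : ℝ)) * Real.log (1 / p k))
    = ∑ k ∈ Finset.Ico l (l + n),
        (∏ i ∈ Finset.range k, p i) *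
          (upperGamma ((m : ℝ) + 1) ((k : ℝ) * Real.log (1 / p k)) -
            upperGamma ((m : ℝ) + 1) (((k : ℝ) + 1) * Real.log (1 / p k))) /
          (p k ^ k * Real.log (1 / p k) ^ m) := by
  apply Finset.sum_congr rfl
  intro k hk
  simp only [Finset.mem_Ico] at hk
  obtain ⟨hp0, hp1⟩ := hp k hk.1 hk.2
  have h1 : (∫ t in (k : ℝ)..((k : ℝ) + 1),
      t ^ m * ((∏ i ∈ Finset.range k, p i) * p k ^ (t - (k : ℝ)) * Real.log (1 / p k)))
      = (∏ i ∈ Finset.range k, p i) * ∫ t in (k : ℝ)..((k : ℝ) + 1),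
          t ^ m * (p k ^ (t - (k : ℝ)) * Real.log (1 / p k)) := by
    rw [← intervalIntegral.integral_const_mul]
    apply intervalIntegral.integral_congr
    intro t _
    ring
  rw [h1, key_integral (p k) hp0 hp1 m k, mul_div_assoc]
end

section
/- Let l ∈ ℕ, n ≥ 1, and suppose 0 < p_k < 1 for all l ≤ k ≤ l+n−1. Then the partial expected future lifetime satisfies ∑_{k=l}^{l+n−1} ∫_k^{k+1} t · P_k · p_k^{t−k} · log(1/p_k) dt = ∑_{k=l}^{l+n−1} P_k · (q_k + (k·q_k − p_k)·log(1/p_k)) / log(1/p_k), where q_k = 1 − p_k. -/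
open Real Finset

lemma single_integral (q : ℝ) (hq0 : 0 < q) (hq1 : q < 1) (C : ℝ) (k : ℕ) :
    ∫ t in (k : ℝ)..((k : ℝ) + 1),
        t * (C * q ^ (t - (k : ℝ)) * Real.log (1 / q))
    = C * ((1 - q) + ((k : ℝ) * (1 - q) - q) * Real.log (1 / q)) / Real.log (1 / q) := by
  have hlq : Real.log q < 0 := Real.log_neg hq0 hq1
  have hL : Real.log (1 / q) = -Real.log q := by
    rw [one_div, Real.log_inv]
  set L := Real.log q with hLdef
  have hLne : L ≠ 0 := ne_of_lt hlq
  -- antiderivative F t = C * q^(t-k) * (-t + 1/L)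
  have hderiv : ∀ t ∈ Set.uIcc (k : ℝ) ((k : ℝ) + 1),
      HasDerivAt (fun t : ℝ => C * q ^ (t - (k : ℝ)) * (-t + 1 / L))
        (t * (C * q ^ (t - (k : ℝ)) * Real.log (1 / q))) t := by
    intro t _
    have h1 : HasDerivAt (fun t : ℝ => q ^ (t - (k : ℝ))) (q ^ (t - (k : ℝ)) * L) t := by
      have := (Real.hasStrictDerivAt_const_rpow hq0 (t - (k : ℝ))).hasDerivAt
      have h2 : HasDerivAt (fun t : ℝ => t - (k : ℝ)) 1 t := (hasDerivAt_id t).sub_const _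
      have h4 := this.comp t h2
      rw [mul_one] at h4
      exact h4
    have h3 : HasDerivAt (fun t : ℝ => -t + 1 / L) (-1) t := by
      simpa using ((hasDerivAt_id t).neg.add_const (1 / L))
    have := ((h1.const_mul C).mul h3)
    refine this.congr_deriv ?_
    rw [hL]
    field_simp
    ring
  have hcont : IntervalIntegrable
      (fun t : ℝ => t * (C * q ^ (t - (k : ℝ)) * Real.log (1 / q)))
      MeasureTheory.volume (k : ℝ) ((k : ℝ) + 1) := by
    apply Continuous.intervalIntegrable
    have hc : Continuous fun t : ℝ => q ^ (t - (k : ℝ)) :=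
      continuous_const.rpow (continuous_id.sub continuous_const) fun t => Or.inl hq0.ne'
    exact continuous_id.mul ((continuous_const.mul hc).mul continuous_const)
  rw [intervalIntegral.integral_eq_sub_of_hasDerivAt hderiv hcont]
  have e0 : ((k : ℝ) + 1 - (k : ℝ)) = 1 := by ring
  have e1 : ((k : ℝ) - (k : ℝ)) = 0 := by ring
  rw [e0, e1, Real.rpow_one, Real.rpow_zero, hL]
  rw [eq_div_iff (by simpa using hLne)]
  field_simp
  ring

/-- partial expected future lifetime (first moment of T_x restricted
to {l ≤ T_x < l+n}) under the constant force of mortality assumption. -/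
theorem partial_expected_future_lifetime
    (p : ℕ → ℝ) (l n : ℕ) (hn : 1 ≤ n)
    (hp : ∀ k, l ≤ k → k < l + n → 0 < p k ∧ p k < 1) :
    ∑ k ∈ Finset.Ico l (l + n),
      ∫ t in (k : ℝ)..((k : ℝ) + 1),
        t * ((∏ i ∈ Finset.range k, p i) * p k ^ (t - (k : ℝ)) * Real.log (1 / p k))
    = ∑ k ∈ Finset.Ico l (l + n),
        (∏ i ∈ Finset.range k, p i) *
          ((1 - p k) + ((k : ℝ) * (1 - p k) - p k) * Real.log (1 / p k)) /
          Real.log (1 / p k) := by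
  refine Finset.sum_congr rfl fun k hk => ?_
  rw [Finset.mem_Ico] at hk
  obtain ⟨h0, h1⟩ := hp k hk.1 hk.2
  exact single_integral (p k) h0 h1 _ k
end

section
/- Let l ∈ ℕ, n ≥ 1, and suppose 0 < p_k < 1 for all l ≤ k ≤ l+n−1. Then the second moment of the restricted future lifetime satisfies ∑_{k=l}^{l+n−1} ∫_k^{k+1} t² · P_k · p_k^{t−k} · log(1/p_k) dt = ∑_{k=l}^{l+n−1} P_k · (2q_k − 2(q_k·k − p_k)·log(p_k) + (k² − (1+k)²·p_k)·(log p_k)²) / (log p_k)², where q_k = 1 − p_k. -/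
open Real Finset

/-- second moment of the future lifetime T_x restricted to
{l ≤ T_x < l+n} under the constant force of mortality assumption. -/
theorem second_moment_future_lifetime
    (p : ℕ → ℝ) (l n : ℕ) (hn : 1 ≤ n)
    (hp : ∀ k, l ≤ k → k < l + n → 0 < p k ∧ p k < 1) :
    ∑ k ∈ Finset.Ico l (l + n),
      ∫ t in (k : ℝ)..((k : ℝ) + 1),
        t ^ 2 * ((∏ i ∈ Finset.range k, p i) * p k ^ (t - (k : ℝ)) * Real.log (1 / p k))
    = ∑ k ∈ Finset.Ico l (l + n),
        (∏ i ∈ Finset.range k, p i) *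
          (2 * (1 - p k) - 2 * ((1 - p k) * (k : ℝ) - p k) * Real.log (p k) +
            ((k : ℝ) ^ 2 - (1 + (k : ℝ)) ^ 2 * p k) * Real.log (p k) ^ 2) /
          Real.log (p k) ^ 2 := by
  refine Finset.sum_congr rfl ?_
  intro k hk
  rw [Finset.mem_Ico] at hk
  obtain ⟨hp0, hp1⟩ := hp k hk.1 hk.2
  set P : ℝ := ∏ i ∈ Finset.range k, p i with hP
  set c : ℝ := Real.log (p k) with hc
  have hc0 : c < 0 := Real.log_neg hp0 hp1
  have hcne : c ≠ 0 := ne_of_lt hc0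
  have hrw : ∀ t : ℝ, t ^ 2 * (P * p k ^ (t - (k : ℝ)) * Real.log (1 / p k))
      = t ^ 2 * (P * Real.exp (c * (t - (k : ℝ))) * (-c)) := by
    intro t
    rw [Real.rpow_def_of_pos hp0, one_div, Real.log_inv]
  simp only [hrw]
  have hd : ∀ t : ℝ, HasDerivAt
      (fun t : ℝ => -P * Real.exp (c * (t - (k : ℝ))) * (t ^ 2 - 2 * t / c + 2 / c ^ 2))
      (t ^ 2 * (P * Real.exp (c * (t - (k : ℝ))) * (-c))) t := by
    intro t
    have hexp : HasDerivAt (fun t : ℝ => Real.exp (c * (t - (k : ℝ))))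
        (Real.exp (c * (t - (k : ℝ))) * c) t := by
      have h1 : HasDerivAt (fun t : ℝ => c * (t - (k : ℝ))) c t := by
        simpa using ((hasDerivAt_id t).sub_const (k : ℝ)).const_mul c
      simpa using h1.exp
    have hpoly : HasDerivAt (fun t : ℝ => t ^ 2 - 2 * t / c + 2 / c ^ 2)
        (2 * t - 2 / c) t := by
      have h2 : HasDerivAt (fun t : ℝ => t ^ 2) (2 * t) t := by
        simpa using hasDerivAt_pow 2 t
      simpa using (h2.sub (((hasDerivAt_id t).const_mul 2).div_const c)).add_const (2 / c ^ 2)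
    have := (hexp.const_mul (-P)).mul hpoly
    refine this.congr_deriv ?_
    field_simp
    ring
  have hcont : Continuous fun t : ℝ => t ^ 2 * (P * Real.exp (c * (t - (k : ℝ))) * (-c)) := by
    fun_prop
  rw [intervalIntegral.integral_eq_sub_of_hasDerivAt (fun t _ => hd t)
    (hcont.intervalIntegrable _ _)]
  have he1 : Real.exp (c * ((k : ℝ) + 1 - (k : ℝ))) = p k := by
    have : (k : ℝ) + 1 - (k : ℝ) = 1 := by ring
    rw [this, mul_one, hc, Real.exp_log hp0]
  have he0 : Real.exp (c * ((k : ℝ) - (k : ℝ))) = 1 := by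
    simp
  rw [he1, he0]
  field_simp
  ring
end

section
/- Let m ≥ 1, l ∈ ℕ, n ≥ 1, ν ∈ (0,1), and suppose 0 < p_k < 1 for all l ≤ k ≤ l+n−1. Then ∑_{k=l}^{l+n−1} ∫_k^{k+1} (t·ν^t)^m · P_k · p_k^{t−k} · log(1/p_k) dt = ∑_{k=l}^{l+n−1} P_k · log(1/p_k) · (Γ(m+1, k·log(1/(ν^m·p_k))) − Γ(m+1, (k+1)·log(1/(ν^m·p_k)))) / (p_k^k · (log(1/(ν^m·p_k)))^{m+1}). (This is the m-th moment of T_x·ν^{T_x} restricted to {l ≤ T_x < l+n} under the constant force of mortality assumption.) -/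
open Real Finset MeasureTheory

lemma integrableGamma (m : ℕ) {x : ℝ} (hx : 0 ≤ x) :
    IntegrableOn (fun t : ℝ => t ^ m * Real.exp (-t)) (Set.Ioi x) := by
  have h := Real.GammaIntegral_convergent (s := (m : ℝ) + 1) (by positivity)
  have h2 : IntegrableOn (fun t : ℝ => t ^ m * Real.exp (-t)) (Set.Ioi 0) := by
    refine h.congr_fun (fun t _ => ?_) measurableSet_Ioi
    show Real.exp (-t) * t ^ ((m : ℝ) + 1 - 1) = t ^ m * Real.exp (-t)
    rw [add_sub_cancel_right, Real.rpow_natCast, mul_comm]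
  exact h2.mono_set (Set.Ioi_subset_Ioi hx)

lemma upperGamma_eq (m : ℕ) (x : ℝ) :
    upperGamma ((m : ℝ) + 1) x = ∫ t in Set.Ioi x, t ^ m * Real.exp (-t) := by
  unfold upperGamma
  congr 1
  ext t
  rw [add_sub_cancel_right, Real.rpow_natCast]

/-- m-th moment of T_x·ν^{T_x} restricted to {l ≤ T_x < l+n}
under the constant force of mortality assumption. -/
theorem moment_continuously_increasing_insurance
    (p : ℕ → ℝ) (ν : ℝ) (hν : ν ∈ Set.Ioo (0 : ℝ) 1)
    (m l n : ℕ) (hm : 1 ≤ m) (hn : 1 ≤ n)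
    (hp : ∀ k, l ≤ k → k < l + n → 0 < p k ∧ p k < 1) :
    ∑ k ∈ Finset.Ico l (l + n),
      ∫ t in (k : ℝ)..((k : ℝ) + 1),
        (t * ν ^ t) ^ m *
          ((∏ i ∈ Finset.range k, p i) * p k ^ (t - (k : ℝ)) * Real.log (1 / p k))
    = ∑ k ∈ Finset.Ico l (l + n),
        (∏ i ∈ Finset.range k, p i) * Real.log (1 / p k) *
          (upperGamma ((m : ℝ) + 1) ((k : ℝ) * Real.log (1 / (ν ^ (m : ℝ) * p k))) -
            upperGamma ((m : ℝ) + 1)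
              (((k : ℝ) + 1) * Real.log (1 / (ν ^ (m : ℝ) * p k)))) /
          (p k ^ k * Real.log (1 / (ν ^ (m : ℝ) * p k)) ^ (m + 1)) := by
  obtain ⟨hν0, hν1⟩ := hν
  refine Finset.sum_congr rfl (fun k hk => ?_)
  rw [Finset.mem_Ico] at hk
  obtain ⟨hp0, hp1⟩ := hp k hk.1 hk.2
  set P := ∏ i ∈ Finset.range k, p i with hP
  set L := Real.log (1 / p k) with hL
  set c := Real.log (1 / (ν ^ (m : ℝ) * p k)) with hc
  have hνm : (0 : ℝ) < ν ^ (m : ℝ) := Real.rpow_pos_of_pos hν0 _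
  have hνm1 : ν ^ (m : ℝ) < 1 :=
    Real.rpow_lt_one hν0.le hν1 (by positivity)
  have hνp0 : (0 : ℝ) < ν ^ (m : ℝ) * p k := mul_pos hνm hp0
  have hνp1 : ν ^ (m : ℝ) * p k < 1 := by nlinarith
  have hcpos : 0 < c := by
    rw [hc, one_div, Real.log_inv]
    linarith [Real.log_neg hνp0 hνp1]
  have hcform : c = -((m : ℝ) * Real.log ν + Real.log (p k)) := by
    rw [hc, one_div, Real.log_inv, Real.log_mul hνm.ne' hp0.ne',
      Real.log_rpow hν0]
  have hpk : (0 : ℝ) < p k ^ k := by positivity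
  -- pointwise identity
  have key : ∀ t : ℝ, (t * ν ^ t) ^ m * (P * p k ^ (t - (k : ℝ)) * L)
      = (P * L / p k ^ k) * ((c⁻¹) ^ m * ((c * t) ^ m * Real.exp (-(c * t)))) := by
    intro t
    have h1 : (c * t) ^ m = c ^ m * t ^ m := mul_pow c t m
    have h2 : (ν : ℝ) ^ t = Real.exp (Real.log ν * t) := Real.rpow_def_of_pos hν0 t
    have h3 : p k ^ (t - (k : ℝ)) = Real.exp (Real.log (p k) * (t - (k : ℝ))) :=
      Real.rpow_def_of_pos hp0 _
    have h4 : (p k : ℝ) ^ k = Real.exp (Real.log (p k) * (k : ℝ)) := by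
      rw [← Real.rpow_natCast (p k) k, Real.rpow_def_of_pos hp0]
    have h5 : (Real.exp (Real.log ν * t)) ^ m = Real.exp ((m : ℝ) * (Real.log ν * t)) := by
      rw [← Real.exp_nat_mul]
    have h6 : Real.exp (-(c * t))
        = Real.exp ((m : ℝ) * (Real.log ν * t)) * Real.exp (Real.log (p k) * (t - (k : ℝ)))
          * Real.exp (Real.log (p k) * (k : ℝ)) := by
      rw [← Real.exp_add, ← Real.exp_add, hcform]; ring_nf
    rw [mul_pow, h2, h3, h5, h1]
    rw [h6] at *
    have hcm : (c⁻¹) ^ m * c ^ m = 1 := by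
      rw [← mul_pow, inv_mul_cancel₀ hcpos.ne', one_pow]
    field_simp [h4]
    rw [h4]
    linear_combination (-(t ^ m * P * L * Real.exp (Real.log (p k) * (k : ℝ)))) * hcm
  -- rewrite the integral
  have hstep1 : (∫ t in (k : ℝ)..((k : ℝ) + 1),
        (t * ν ^ t) ^ m * (P * p k ^ (t - (k : ℝ)) * L))
      = (P * L / p k ^ k) * ((c⁻¹) ^ m *
          ∫ t in (k : ℝ)..((k : ℝ) + 1), (c * t) ^ m * Real.exp (-(c * t))) := by
    rw [← intervalIntegral.integral_const_mul, ← intervalIntegral.integral_const_mul]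
    exact intervalIntegral.integral_congr (fun t _ => key t)
  rw [hstep1]
  have hstep2 : (∫ t in (k : ℝ)..((k : ℝ) + 1), (c * t) ^ m * Real.exp (-(c * t)))
      = c⁻¹ • ∫ u in (c * (k : ℝ))..(c * ((k : ℝ) + 1)), u ^ m * Real.exp (-u) :=
    intervalIntegral.integral_comp_mul_left (fun u => u ^ m * Real.exp (-u)) hcpos.ne'
  have hk0 : (0 : ℝ) ≤ c * (k : ℝ) := by positivity
  have hkk : c * (k : ℝ) ≤ c * ((k : ℝ) + 1) := by nlinarith
  have hstep3 : (∫ u in (c * (k : ℝ))..(c * ((k : ℝ) + 1)), u ^ m * Real.exp (-u))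
      = upperGamma ((m : ℝ) + 1) (c * (k : ℝ)) - upperGamma ((m : ℝ) + 1) (c * ((k : ℝ) + 1)) :=
    (upperGamma_sub m hk0 hkk).symm
  rw [hstep2, smul_eq_mul, hstep3, mul_comm c ((k : ℝ)), mul_comm c ((k : ℝ) + 1)]
  have hcm1 : (c : ℝ) ^ (m + 1) ≠ 0 := by positivity
  field_simp
  ring_nf
  have hcm' : c ^ m * c⁻¹ ^ m = 1 := by
    rw [← mul_pow, mul_inv_cancel₀ hcpos.ne', one_pow]
  linear_combination (P * L * c * (upperGamma (1 + (m : ℝ)) (c * (k : ℝ))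
    - upperGamma (1 + (m : ℝ)) (c + c * (k : ℝ)))) * hcm'
end

section
/- Let l ∈ ℕ, n ≥ 1, ν ∈ (0,1), and suppose 0 < p_k < 1 for all l ≤ k ≤ l+n−1. Then ∑_{k=l}^{l+n−1} ∫_k^{k+1} (t·ν^t)² · P_k · p_k^{t−k} · log(1/p_k) dt = ∑_{k=l}^{l+n−1} P_k · log(1/p_k) · ν^{2k} · (−2 + 2·p_k·ν² + log(ν²·p_k)·(2k − 2·p_k·(1+k)·ν² + (−k² + p_k·(1+k)²·ν²)·log(ν²·p_k))) / (log(ν²·p_k))³. -/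
open Real Finset

lemma key_integral_s6 (a : ℝ) (ha : a ≠ 0) (b c : ℝ) :
    ∫ t in b..c, t ^ 2 * Real.exp (a * t)
      = Real.exp (a * c) * (c ^ 2 / a - 2 * c / a ^ 2 + 2 / a ^ 3)
        - Real.exp (a * b) * (b ^ 2 / a - 2 * b / a ^ 2 + 2 / a ^ 3) := by
  have h : ∀ t : ℝ, HasDerivAt
      (fun t => Real.exp (a * t) * (t ^ 2 / a - 2 * t / a ^ 2 + 2 / a ^ 3))
      (t ^ 2 * Real.exp (a * t)) t := by
    intro t
    have h1 : HasDerivAt (fun t => Real.exp (a * t)) (a * Real.exp (a * t)) t := by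
      exact ((Real.hasDerivAt_exp (a * t)).comp t
        ((hasDerivAt_id t).const_mul a)).congr_deriv (by simp only [id, mul_one]; ring)
    have h2 : HasDerivAt (fun t : ℝ => t ^ 2 / a - 2 * t / a ^ 2 + 2 / a ^ 3)
        (2 * t / a - 2 / a ^ 2) t := by
      have := (((hasDerivAt_pow 2 t).div_const a).sub
        (((hasDerivAt_id t).const_mul 2).div_const (a ^ 2))).add_const (2 / a ^ 3)
      simpa [mul_comm] using this
    have := h1.mul h2
    refine this.congr_deriv ?_
    field_simp
    ring
  rw [intervalIntegral.integral_eq_sub_of_hasDerivAt (fun t _ => h t)]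
  exact (Continuous.intervalIntegrable (by continuity) b c)

/-- second moment of T_x·ν^{T_x} restricted to {l ≤ T_x < l+n}
under the constant force of mortality assumption. -/
theorem second_moment_continuously_increasing_insurance
    (p : ℕ → ℝ) (ν : ℝ) (hν : ν ∈ Set.Ioo (0 : ℝ) 1)
    (l n : ℕ) (hn : 1 ≤ n)
    (hp : ∀ k, l ≤ k → k < l + n → 0 < p k ∧ p k < 1) :
    ∑ k ∈ Finset.Ico l (l + n),
      ∫ t in (k : ℝ)..((k : ℝ) + 1),
        (t * ν ^ t) ^ 2 *
          ((∏ i ∈ Finset.range k, p i) * p k ^ (t - (k : ℝ)) * Real.log (1 / p k))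
    = ∑ k ∈ Finset.Ico l (l + n),
        (∏ i ∈ Finset.range k, p i) * Real.log (1 / p k) * ν ^ (2 * (k : ℝ)) *
          (-2 + 2 * p k * ν ^ 2 +
            Real.log (ν ^ 2 * p k) *
              (2 * (k : ℝ) - 2 * p k * (1 + (k : ℝ)) * ν ^ 2 +
                (-(k : ℝ) ^ 2 + p k * (1 + (k : ℝ)) ^ 2 * ν ^ 2) *
                  Real.log (ν ^ 2 * p k))) /
          Real.log (ν ^ 2 * p k) ^ 3 := by
  obtain ⟨hν0, hν1⟩ := hν
  refine Finset.sum_congr rfl ?_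
  intro k hk
  obtain ⟨hkl, hkr⟩ := Finset.mem_Ico.mp hk
  obtain ⟨hp0, hp1⟩ := hp k hkl hkr
  set q : ℝ := ν ^ 2 * p k with hqdef
  have hq0 : 0 < q := by positivity
  have hq1 : q < 1 := by nlinarith
  have ha : Real.log q < 0 := Real.log_neg hq0 hq1
  have ha0 : Real.log q ≠ 0 := ne_of_lt ha
  set a := Real.log q with hadef
  have hexp : ∀ t : ℝ, Real.exp (a * t) = q ^ t := fun t =>
    (Real.rpow_def_of_pos hq0 t).symm
  have hν2 : (ν : ℝ) ^ (2 : ℝ) = ν ^ 2 := by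
    rw [← Real.rpow_natCast ν 2]; norm_num
  have hcong : (∫ t in (k:ℝ)..((k:ℝ)+1), (t * ν ^ t) ^ 2 *
        ((∏ i ∈ Finset.range k, p i) * p k ^ (t - (k:ℝ)) * Real.log (1 / p k)))
      = ((∏ i ∈ Finset.range k, p i) * Real.log (1 / p k) * p k ^ (-(k:ℝ))) *
        ∫ t in (k:ℝ)..((k:ℝ)+1), t ^ 2 * Real.exp (a * t) := by
    rw [← intervalIntegral.integral_const_mul]
    apply intervalIntegral.integral_congr
    intro t _
    have h2 : q ^ t = (ν ^ t) ^ 2 * p k ^ t := by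
      rw [hqdef, Real.mul_rpow (by positivity) hp0.le]
      congr 1
      rw [← hν2, ← Real.rpow_natCast (ν ^ t) 2, ← Real.rpow_mul hν0.le,
        ← Real.rpow_mul hν0.le]
      norm_num [mul_comm]
    have h3 : p k ^ (t - (k:ℝ)) = p k ^ t * p k ^ (-(k:ℝ)) := by
      rw [← Real.rpow_add hp0]; ring_nf
    simp only [hexp, h2, h3]
    ring
  rw [hcong, key_integral_s6 a ha0]
  have hqk : p k ^ (-(k:ℝ)) * q ^ ((k:ℝ)) = ν ^ (2 * (k:ℝ)) := by
    rw [hqdef, Real.mul_rpow (by positivity) hp0.le,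
      Real.rpow_mul hν0.le, hν2]
    rw [mul_comm (p k ^ (-(k:ℝ))), mul_assoc, ← Real.rpow_add hp0]
    norm_num
  have he1 : Real.exp (a * ((k:ℝ) + 1)) = q ^ ((k:ℝ)) * q := by
    rw [hexp, Real.rpow_add hq0, Real.rpow_one]
  have he2 : Real.exp (a * (k:ℝ)) = q ^ ((k:ℝ)) := hexp _
  rw [he1, he2]
  have halg : q * (((k:ℝ) + 1) ^ 2 / a - 2 * ((k:ℝ) + 1) / a ^ 2 + 2 / a ^ 3)
      - ((k:ℝ) ^ 2 / a - 2 * (k:ℝ) / a ^ 2 + 2 / a ^ 3)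
      = (-2 + 2 * p k * ν ^ 2 +
          a * (2 * (k:ℝ) - 2 * p k * (1 + (k:ℝ)) * ν ^ 2 +
            (-(k:ℝ) ^ 2 + p k * (1 + (k:ℝ)) ^ 2 * ν ^ 2) * a)) / a ^ 3 := by
    rw [hqdef]
    field_simp
    ring
  linear_combination
    ((∏ i ∈ Finset.range k, p i) * Real.log (1 / p k) * q ^ ((k:ℝ)) *
      p k ^ (-(k:ℝ))) * halg +
    ((∏ i ∈ Finset.range k, p i) * Real.log (1 / p k) *
      ((-2 + 2 * p k * ν ^ 2 +
        a * (2 * (k:ℝ) - 2 * p k * (1 + (k:ℝ)) * ν ^ 2 +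
          (-(k:ℝ) ^ 2 + p k * (1 + (k:ℝ)) ^ 2 * ν ^ 2) * a)) / a ^ 3)) * hqk
end

section
/- Fix k ∈ ℕ, let 0 < p_k < 1 and P_k > 0, and let g : ℝ → ℝ be differentiable on [k, k+1]. If g′(t) ≤ 0 for all t ∈ [k, k+1], then ∫_k^{k+1} g(t) · P_k · p_k^{t−k} · log(1/p_k) dt ≤ ∫_k^{k+1} g(t) · P_k·p_k · (1−p_k) / (1 − (k+1−t)·(1−p_k))² dt; if instead g′(t) ≥ 0 for all t ∈ [k, k+1], the reverse inequality holds. (That is, the expectation of a non-increasing function of the future lifetime under the constant force of mortality assumption (C) is at most the corresponding expectation under Balducci's assumption (B), with the inequality reversed for non-decreasing functions.) -/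
open Real MeasureTheory intervalIntegral Set

lemma cf_balducci_key (a p P : ℝ) (hp0 : 0 < p) (hp1 : p < 1) (hP : 0 < P)
    (g g' : ℝ → ℝ)
    (hg : ∀ t ∈ Icc a (a+1), HasDerivWithinAt g (g' t) (Icc a (a+1)) t)
    (hint : IntervalIntegrable g' volume a (a+1)) :
    (∫ t in a..(a+1), g t * (P * p ^ (t - a) * Real.log (1 / p)))
      - (∫ t in a..(a+1), g t * (P * p * (1 - p) / (1 - (a + 1 - t) * (1 - p)) ^ 2))
    = ∫ t in a..(a+1), g' t * (P * p ^ (t - a) - P * p / (1 - (a + 1 - t) * (1 - p))) := by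
  have hab : a ≤ a + 1 := by linarith
  set D : ℝ → ℝ := fun t => 1 - (a + 1 - t) * (1 - p) with hD_def
  set H : ℝ → ℝ := fun t => P * p ^ (t - a) - P * p / D t with hH_def
  set H' : ℝ → ℝ := fun t => P * (p ^ (t - a) * Real.log p) + P * p * (1 - p) / (D t) ^ 2
    with hH'_def
  have hDpos : ∀ t ∈ Icc a (a+1), 0 < D t := by
    intro t ht
    have h1 : (0:ℝ) ≤ (t - a) * (1 - p) :=
      mul_nonneg (by linarith [ht.1]) (by linarith)
    simp only [hD_def]
    nlinarith [ht.2]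
  have hSC : ∀ t : ℝ, HasDerivAt (fun t => P * p ^ (t - a))
      (P * (p ^ (t - a) * Real.log p)) t := by
    intro t
    have h1 := (Real.hasStrictDerivAt_const_rpow hp0 (t - a)).hasDerivAt
    have h2 : HasDerivAt (fun t : ℝ => t - a) 1 t := (hasDerivAt_id t).sub_const a
    have h3 := (h1.comp t h2).const_mul P
    simpa using h3
  have hD' : ∀ t : ℝ, HasDerivAt D (1 - p) t := by
    intro t
    have : HasDerivAt (fun t : ℝ => 1 - (a + 1 - t) * (1 - p)) (-((-1) * (1 - p))) t := by
      exact (((hasDerivAt_id t).const_sub (a+1)).mul_const (1-p)).const_sub 1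
    simpa using this
  have hSB : ∀ t ∈ Icc a (a+1), HasDerivAt (fun t => P * p / D t)
      (-(P * p * (1 - p) / (D t) ^ 2)) t := by
    intro t ht
    have h := (hasDerivAt_const t (P * p)).div (hD' t) (hDpos t ht).ne'
    refine h.congr_deriv ?_
    ring
  have hH : ∀ t ∈ Icc a (a+1), HasDerivAt H (H' t) t := by
    intro t ht
    have := (hSC t).sub (hSB t ht)
    refine this.congr_deriv ?_
    show _ = P * (p ^ (t - a) * Real.log p) + P * p * (1 - p) / (D t) ^ 2; ring
  have c1 : Continuous fun t : ℝ => p ^ (t - a) := by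
    simp only [Real.rpow_def_of_pos hp0]
    fun_prop
  have cD : Continuous D := by simp only [hD_def]; fun_prop
  have hgc : ContinuousOn g (Icc a (a+1)) := fun t ht => (hg t ht).continuousWithinAt
  have hSBc : ContinuousOn (fun t => P * p / D t) (Icc a (a+1)) :=
    ContinuousOn.div continuousOn_const cD.continuousOn (fun t ht => (hDpos t ht).ne')
  have hHc : ContinuousOn H (Icc a (a+1)) := by
    exact ((continuous_const.mul c1).continuousOn).sub hSBc
  have hH'c : ContinuousOn H' (Icc a (a+1)) := by
    apply ContinuousOn.add
    · exact (continuous_const.mul (c1.mul continuous_const)).continuousOn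
    · exact ContinuousOn.div continuousOn_const (cD.pow 2).continuousOn
        (fun t ht => pow_ne_zero 2 (hDpos t ht).ne')
  have huIcc : uIcc a (a+1) = Icc a (a+1) := uIcc_of_le hab
  have I1 : IntervalIntegrable (fun t => g' t * H t) volume a (a+1) := by
    apply hint.mul_continuousOn
    rw [huIcc]; exact hHc
  have I2 : IntervalIntegrable (fun t => g t * H' t) volume a (a+1) := by
    apply ContinuousOn.intervalIntegrable
    rw [huIcc]; exact hgc.mul hH'c
  have key : (∫ t in a..(a+1), (g' t * H t + g t * H' t))
      = g (a+1) * H (a+1) - g a * H a := by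
    apply integral_eq_sub_of_hasDeriv_right_of_le hab (hgc.mul hHc) _ (I1.add I2)
    intro t ht
    have hmem : Icc a (a+1) ∈ nhds t := Icc_mem_nhds ht.1 ht.2
    have hgt : HasDerivAt g (g' t) t := (hg t (Ioo_subset_Icc_self ht)).hasDerivAt hmem
    exact (hgt.mul (hH t (Ioo_subset_Icc_self ht))).hasDerivWithinAt
  have hHa : H a = 0 := by
    simp only [hH_def, hD_def, sub_self, Real.rpow_zero]
    rw [show (1:ℝ) - (a + 1 - a) * (1 - p) = p by ring]
    field_simp
    ring
  have hHb : H (a+1) = 0 := by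
    simp only [hH_def, hD_def]
    rw [show a + 1 - a = (1:ℝ) by ring, Real.rpow_one]
    simp
  have hsplit : (∫ t in a..(a+1), g t * H' t) = -∫ t in a..(a+1), g' t * H t := by
    have := integral_add I1 I2
    rw [key, hHa, hHb] at this
    simp only [mul_zero, sub_zero, zero_sub] at this
    linarith [this]
  have IC : IntervalIntegrable (fun t => g t * (P * p ^ (t - a) * Real.log (1 / p)))
      volume a (a+1) := by
    apply ContinuousOn.intervalIntegrable
    rw [huIcc]
    exact hgc.mul ((continuous_const.mul c1).mul continuous_const).continuousOn
  have IB : IntervalIntegrable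
      (fun t => g t * (P * p * (1 - p) / (1 - (a + 1 - t) * (1 - p)) ^ 2)) volume a (a+1) := by
    apply ContinuousOn.intervalIntegrable
    rw [huIcc]
    refine hgc.mul (ContinuousOn.div continuousOn_const ((cD.pow 2).continuousOn) ?_)
    exact fun t ht => pow_ne_zero 2 (hDpos t ht).ne'
  have e1 : ∀ t : ℝ, g t * (P * p ^ (t - a) * Real.log (1 / p))
      - g t * (P * p * (1 - p) / (1 - (a + 1 - t) * (1 - p)) ^ 2) = -(g t * H' t) := by
    intro t
    rw [one_div, Real.log_inv]
    simp only [hH'_def, hD_def]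
    ring
  calc (∫ t in a..(a+1), g t * (P * p ^ (t - a) * Real.log (1 / p)))
      - (∫ t in a..(a+1), g t * (P * p * (1 - p) / (1 - (a + 1 - t) * (1 - p)) ^ 2))
      = ∫ t in a..(a+1), (g t * (P * p ^ (t - a) * Real.log (1 / p))
          - g t * (P * p * (1 - p) / (1 - (a + 1 - t) * (1 - p)) ^ 2)) :=
        (integral_sub IC IB).symm
    _ = ∫ t in a..(a+1), -(g t * H' t) := by
        apply integral_congr
        intro t _
        exact e1 t
    _ = -∫ t in a..(a+1), g t * H' t := integral_neg
    _ = ∫ t in a..(a+1), g' t * H t := by rw [hsplit, neg_neg]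

lemma cf_balducci_H_nonneg (a p P : ℝ) (hp0 : 0 < p) (hp1 : p < 1) (hP : 0 < P)
    {t : ℝ} (ht : t ∈ Icc a (a+1)) :
    0 ≤ P * p ^ (t - a) - P * p / (1 - (a + 1 - t) * (1 - p)) := by
  set s : ℝ := t - a with hs_def
  have hs0 : 0 ≤ s := by simp only [hs_def]; linarith [ht.1]
  have hs1 : s ≤ 1 := by simp only [hs_def]; linarith [ht.2]
  have hD : 1 - (a + 1 - t) * (1 - p) = (1 - s) * p + s * 1 := by
    simp only [hs_def]; ring
  have hDpos : (0:ℝ) < (1 - s) * p + s * 1 := by nlinarith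
  have amgm : p ^ (1 - s) * 1 ^ s ≤ (1 - s) * p + s * 1 :=
    Real.geom_mean_le_arith_mean2_weighted (by linarith) hs0 hp0.le zero_le_one (by ring)
  rw [Real.one_rpow, mul_one] at amgm
  have hps : p ^ (1 - s) = p / p ^ s := by
    rw [Real.rpow_sub hp0, Real.rpow_one]
  have hpspos : (0:ℝ) < p ^ s := Real.rpow_pos_of_pos hp0 s
  have h1 : p ≤ ((1 - s) * p + s * 1) * p ^ s := by
    rw [hps, div_le_iff₀ hpspos] at amgm
    linarith [amgm]
  rw [hD, sub_nonneg, div_le_iff₀ hDpos]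
  nlinarith [mul_le_mul_of_nonneg_left h1 hP.le]

/-- on [k, k+1], the expectation of a non-increasing differentiable
function under the constant force of mortality density is at most the expectation
under Balducci's density, and the inequality reverses for non-decreasing functions. -/
theorem constant_force_le_balducci
    (k : ℕ) (p P : ℝ) (hp0 : 0 < p) (hp1 : p < 1) (hP : 0 < P)
    (g g' : ℝ → ℝ)
    (hg : ∀ t ∈ Set.Icc (k : ℝ) ((k : ℝ) + 1),
      HasDerivWithinAt g (g' t) (Set.Icc (k : ℝ) ((k : ℝ) + 1)) t) :
    ((∀ t ∈ Set.Icc (k : ℝ) ((k : ℝ) + 1), g' t ≤ 0) →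
      (∫ t in (k : ℝ)..((k : ℝ) + 1),
          g t * (P * p ^ (t - (k : ℝ)) * Real.log (1 / p)))
        ≤ ∫ t in (k : ℝ)..((k : ℝ) + 1),
            g t * (P * p * (1 - p) / (1 - ((k : ℝ) + 1 - t) * (1 - p)) ^ 2)) ∧
    ((∀ t ∈ Set.Icc (k : ℝ) ((k : ℝ) + 1), 0 ≤ g' t) →
      (∫ t in (k : ℝ)..((k : ℝ) + 1),
          g t * (P * p * (1 - p) / (1 - ((k : ℝ) + 1 - t) * (1 - p)) ^ 2))
        ≤ ∫ t in (k : ℝ)..((k : ℝ) + 1),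
            g t * (P * p ^ (t - (k : ℝ)) * Real.log (1 / p))) := by
  set a : ℝ := (k : ℝ) with ha_def
  have hab : a ≤ a + 1 := by linarith
  have hgc : ContinuousOn g (Icc a (a+1)) := fun t ht => (hg t ht).continuousWithinAt
  have hderivAt : ∀ x ∈ Ioo a (a+1), HasDerivAt g (g' x) x := by
    intro x hx
    exact (hg x (Ioo_subset_Icc_self hx)).hasDerivAt (Icc_mem_nhds hx.1 hx.2)
  have hHnn : ∀ t ∈ Icc a (a+1),
      0 ≤ P * p ^ (t - a) - P * p / (1 - (a + 1 - t) * (1 - p)) :=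
    fun t ht => cf_balducci_H_nonneg a p P hp0 hp1 hP ht
  constructor
  · intro hsign
    have hint : IntervalIntegrable g' volume a (a+1) := by
      have h := intervalIntegrable_deriv_of_nonneg (g := fun t => -g t)
        (g' := fun t => -g' t) (a := a) (b := a+1)
        (by rw [uIcc_of_le hab]; exact hgc.neg)
        (fun x hx => by
          have hx' : x ∈ Ioo a (a+1) := by
            simpa [min_eq_left hab, max_eq_right hab] using hx
          exact (hderivAt x hx').neg)
        (fun x hx => by
          have hx' : x ∈ Ioo a (a+1) := by
            simpa [min_eq_left hab, max_eq_right hab] using hx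
          simpa using hsign x (Ioo_subset_Icc_self hx'))
      have h2 := h.neg
      have he : (-fun t => -g' t) = g' := by funext t; simp
      rwa [he] at h2
    have key := cf_balducci_key a p P hp0 hp1 hP g g' hg hint
    have hnn : 0 ≤ ∫ t in a..(a+1),
        -(g' t * (P * p ^ (t - a) - P * p / (1 - (a + 1 - t) * (1 - p)))) := by
      apply integral_nonneg hab
      intro u hu
      have := mul_nonpos_of_nonpos_of_nonneg (hsign u hu) (hHnn u hu)
      linarith
    rw [intervalIntegral.integral_neg] at hnn
    linarith [key, hnn]
  · intro hsign
    have hint : IntervalIntegrable g' volume a (a+1) := by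
      apply intervalIntegrable_deriv_of_nonneg
        (by rw [uIcc_of_le hab]; exact hgc)
      · intro x hx
        have hx' : x ∈ Ioo a (a+1) := by
          simpa [min_eq_left hab, max_eq_right hab] using hx
        exact hderivAt x hx'
      · intro x hx
        have hx' : x ∈ Ioo a (a+1) := by
          simpa [min_eq_left hab, max_eq_right hab] using hx
        exact hsign x (Ioo_subset_Icc_self hx')
    have key := cf_balducci_key a p P hp0 hp1 hP g g' hg hint
    have hnn : 0 ≤ ∫ t in a..(a+1),
        g' t * (P * p ^ (t - a) - P * p / (1 - (a + 1 - t) * (1 - p))) := by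
      apply integral_nonneg hab
      intro u hu
      exact mul_nonneg (hsign u hu) (hHnn u hu)
    linarith [key, hnn]
end

section
/- Fix k ∈ ℕ, let 0 < p_k < 1 and P_k > 0, and let g : ℝ → ℝ be differentiable on [k, k+1]. If g′(t) ≤ 0 for all t ∈ [k, k+1], then ∫_k^{k+1} g(t) · P_k · (1 − p_k) dt ≤ ∫_k^{k+1} g(t) · P_k · p_k^{t−k} · log(1/p_k) dt; if instead g′(t) ≥ 0 for all t ∈ [k, k+1], the reverse inequality holds. (That is, the expectation of a non-increasing function of the future lifetime under the uniform distribution of deaths assumption (UDD) is at most the corresponding expectation under the constant force of mortality assumption (C), with the inequality reversed for non-decreasing functions.) -/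
open Real

lemma udd_aux_hasDerivAt (p : ℝ) (hp0 : 0 < p) (k : ℝ) (t : ℝ) :
    HasDerivAt (fun t : ℝ => p ^ (t - k)) (p ^ (t - k) * Real.log p) t := by
  have heq : (fun t : ℝ => p ^ (t - k)) = fun t : ℝ => Real.exp (Real.log p * (t - k)) :=
    funext fun t => Real.rpow_def_of_pos hp0 _
  have h1 : HasDerivAt (fun t : ℝ => Real.log p * (t - k)) (Real.log p) t := by
    simpa using ((hasDerivAt_id t).sub_const k).const_mul (Real.log p)
  have h2 := (Real.hasDerivAt_exp (Real.log p * (t - k))).comp t h1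
  rw [heq]
  rw [Real.rpow_def_of_pos hp0]; exact h2

/-- on [k, k+1], the expectation of a non-increasing differentiable
function under the uniform distribution of deaths density is at most the expectation
under the constant force of mortality density, and the inequality reverses for
non-decreasing functions. -/
theorem udd_le_constant_force
    (k : ℕ) (p P : ℝ) (hp0 : 0 < p) (hp1 : p < 1) (hP : 0 < P)
    (g g' : ℝ → ℝ)
    (hg : ∀ t ∈ Set.Icc (k : ℝ) ((k : ℝ) + 1),
      HasDerivWithinAt g (g' t) (Set.Icc (k : ℝ) ((k : ℝ) + 1)) t) :
    ((∀ t ∈ Set.Icc (k : ℝ) ((k : ℝ) + 1), g' t ≤ 0) →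
      (∫ t in (k : ℝ)..((k : ℝ) + 1), g t * (P * (1 - p)))
        ≤ ∫ t in (k : ℝ)..((k : ℝ) + 1),
            g t * (P * p ^ (t - (k : ℝ)) * Real.log (1 / p))) ∧
    ((∀ t ∈ Set.Icc (k : ℝ) ((k : ℝ) + 1), 0 ≤ g' t) →
      (∫ t in (k : ℝ)..((k : ℝ) + 1),
          g t * (P * p ^ (t - (k : ℝ)) * Real.log (1 / p)))
        ≤ ∫ t in (k : ℝ)..((k : ℝ) + 1), g t * (P * (1 - p))) := by
  set a : ℝ := (k : ℝ)
  set b : ℝ := (k : ℝ) + 1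
  have hab : a ≤ b := by simp [a, b]
  have hIcc : Set.uIcc a b = Set.Icc a b := Set.uIcc_of_le hab
  set L : ℝ := Real.log (1 / p) with hL
  have hLpos : 0 < L := Real.log_pos (one_lt_one_div hp0 hp1)
  have hLeq : L = -Real.log p := by rw [hL, one_div, Real.log_inv]
  -- the density difference h
  set h : ℝ → ℝ := fun t => P * (p ^ (t - a) * L - (1 - p)) with hh
  -- continuity facts
  have hgc : ContinuousOn g (Set.Icc a b) := fun t ht => (hg t ht).continuousWithinAt
  have hrc : Continuous fun t : ℝ => p ^ (t - a) := by
    have heq : (fun t : ℝ => p ^ (t - a)) = fun t : ℝ => Real.exp (Real.log p * (t - a)) :=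
      funext fun t => Real.rpow_def_of_pos hp0 _
    rw [heq]
    exact Real.continuous_exp.comp (continuous_const.mul (continuous_id.sub continuous_const))
  have hhc : Continuous h := by
    apply continuous_const.mul ((hrc.mul continuous_const).sub continuous_const)
  -- rpow is positive, antitone in exponent
  have hrant : ∀ s t : ℝ, s ≤ t → p ^ (t - a) ≤ p ^ (s - a) := fun s t hst =>
    Real.rpow_le_rpow_of_exponent_ge hp0 hp1.le (by linarith)
  have hhant : ∀ s t : ℝ, s ≤ t → h t ≤ h s := by
    intro s t hst
    have := hrant s t hst
    have : p ^ (t - a) * L ≤ p ^ (s - a) * L := by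
      exact mul_le_mul_of_nonneg_right this hLpos.le
    simp only [hh]
    nlinarith
  -- integral of h is zero
  have hint : (∫ t in a..b, h t) = 0 := by
    have hF : ∀ t ∈ Set.uIcc a b,
        HasDerivAt (fun t => P * (-(p ^ (t - a)) - (1 - p) * t)) (h t) t := by
      intro t _
      have h1 := udd_aux_hasDerivAt p hp0 a t
      have h2 : HasDerivAt (fun t : ℝ => -(p ^ (t - a)) - (1 - p) * t)
          (-(p ^ (t - a) * Real.log p) - (1 - p)) t := by
        exact (h1.neg).sub ((hasDerivAt_id t).const_mul (1 - p) |>.congr_deriv (by ring))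
      have h3 := h2.const_mul P
      refine h3.congr_deriv ?_
      simp only [hh, hLeq]; ring
    have := intervalIntegral.integral_eq_sub_of_hasDerivAt hF
      (hhc.intervalIntegrable a b)
    rw [this]
    have hb1 : b - a = 1 := by simp [a, b]
    have : p ^ (b - a) = p := by rw [hb1, Real.rpow_one]
    rw [this]
    have : p ^ (a - a) = 1 := by rw [sub_self, Real.rpow_zero]
    rw [this]
    ring
  -- h is ≥ 0 at a and ≤ 0 at b
  have hha : 0 ≤ h a := by
    have h1 : Real.log p ≤ p - 1 := Real.log_le_sub_one_of_pos hp0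
    have : p ^ (a - a) = 1 := by rw [sub_self, Real.rpow_zero]
    simp only [hh, this, one_mul, hLeq]
    nlinarith
  have hhb : h b ≤ 0 := by
    have h1 : Real.log (1 / p) ≤ 1 / p - 1 :=
      Real.log_le_sub_one_of_pos (by positivity)
    have hb1 : b - a = 1 := by simp [a, b]
    have h2 : p ^ (b - a) = p := by rw [hb1, Real.rpow_one]
    simp only [hh, h2, ← hL]
    have h3 : p * L ≤ p * (1 / p - 1) := mul_le_mul_of_nonneg_left h1 hp0.le
    have h4 : p * (1 / p - 1) = 1 - p := by field_simp
    nlinarith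
  -- find the crossing point t0
  obtain ⟨t0, ht0, ht0h⟩ : ∃ t0 ∈ Set.Icc a b, h t0 = 0 := by
    have := intermediate_value_Icc' hab hhc.continuousOn (Set.mem_Icc.mpr ⟨hhb, hha⟩)
    obtain ⟨t0, ht0, ht0h⟩ := this
    exact ⟨t0, ht0, ht0h⟩
  -- sign of h relative to t0
  have hpos : ∀ t, t ≤ t0 → 0 ≤ h t := fun t ht => ht0h ▸ hhant t t0 ht
  have hneg : ∀ t, t0 ≤ t → h t ≤ 0 := fun t ht => ht0h ▸ hhant t0 t ht
  -- integrability
  have hig : IntervalIntegrable (fun t => g t * h t) MeasureTheory.volume a b := by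
    apply ContinuousOn.intervalIntegrable
    rw [hIcc]
    exact hgc.mul hhc.continuousOn
  have higC : IntervalIntegrable (fun t => g t * (P * p ^ (t - a) * L))
      MeasureTheory.volume a b := by
    apply ContinuousOn.intervalIntegrable
    rw [hIcc]
    exact hgc.mul ((continuous_const.mul hrc).mul continuous_const).continuousOn
  have higU : IntervalIntegrable (fun t => g t * (P * (1 - p)))
      MeasureTheory.volume a b := by
    apply ContinuousOn.intervalIntegrable
    rw [hIcc]
    exact hgc.mul continuousOn_const
  -- the difference of the two expectations equals ∫ g·h
  have hdiff : (∫ t in a..b, g t * (P * p ^ (t - a) * L))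
      - (∫ t in a..b, g t * (P * (1 - p))) = ∫ t in a..b, g t * h t := by
    rw [← intervalIntegral.integral_sub higC higU]
    congr 1
    funext t
    simp only [hh]
    ring
  -- ∫ g·h = ∫ (g - g t0)·h
  have hsplit : (∫ t in a..b, g t * h t) = ∫ t in a..b, (g t - g t0) * h t := by
    have h1 : (fun t => (g t - g t0) * h t) = fun t => g t * h t - g t0 * h t := by
      funext t; ring
    rw [h1, intervalIntegral.integral_sub hig
      (by exact (continuous_const.mul hhc).intervalIntegrable a b :
        IntervalIntegrable (fun t => g t0 * h t) MeasureTheory.volume a b),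
      intervalIntegral.integral_const_mul, hint, mul_zero, sub_zero]
  constructor
  · -- nonincreasing case
    intro hg'
    have hant : AntitoneOn g (Set.Icc a b) := by
      apply antitoneOn_of_hasDerivWithinAt_nonpos (convex_Icc a b) hgc
      · intro x hx
        rw [interior_Icc] at hx ⊢
        exact (hg x (Set.mem_Icc_of_Ioo hx)).mono Set.Ioo_subset_Icc_self
      · intro x hx
        rw [interior_Icc] at hx
        exact hg' x (Set.mem_Icc_of_Ioo hx)
    have key : 0 ≤ ∫ t in a..b, (g t - g t0) * h t := by
      apply intervalIntegral.integral_nonneg hab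
      intro t ht
      rcases le_total t t0 with hle | hle
      · have h1 : g t0 ≤ g t := hant ht ht0 hle
        exact mul_nonneg (by linarith) (hpos t hle)
      · have h1 : g t ≤ g t0 := hant ht0 ht hle
        nlinarith [hneg t hle]
    rw [← hsplit, ← hdiff] at key
    linarith
  · -- nondecreasing case
    intro hg'
    have hmon : MonotoneOn g (Set.Icc a b) := by
      apply monotoneOn_of_hasDerivWithinAt_nonneg (convex_Icc a b) hgc
      · intro x hx
        rw [interior_Icc] at hx ⊢
        exact (hg x (Set.mem_Icc_of_Ioo hx)).mono Set.Ioo_subset_Icc_self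
      · intro x hx
        rw [interior_Icc] at hx
        exact hg' x (Set.mem_Icc_of_Ioo hx)
    have key : 0 ≤ ∫ t in a..b, -((g t - g t0) * h t) := by
      apply intervalIntegral.integral_nonneg hab
      intro t ht
      rw [neg_nonneg]
      rcases le_total t t0 with hle | hle
      · have h1 : g t ≤ g t0 := hmon ht ht0 hle
        exact mul_nonpos_of_nonpos_of_nonneg (by linarith) (hpos t hle)
      · have h1 : g t0 ≤ g t := hmon ht0 ht hle
        exact mul_nonpos_of_nonneg_of_nonpos (by linarith) (hneg t hle)
    rw [intervalIntegral.integral_neg] at key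
    have key2 : (∫ t in a..b, (g t - g t0) * h t) ≤ 0 := by linarith
    rw [← hsplit, ← hdiff] at key2
    linarith
end

section
/- Let j ≥ 1, n ≥ 1, m ∈ ℕ, l ∈ ℕ, n₁ ∈ {0, 1, …, j−1}, ν ∈ (0,1), and suppose 0 < p_k < 1 for all l ≤ k ≤ l+n. Then ∑_{k=l}^{n+l−1} ∑_{d=n₁}^{j−1} ν^{m(k+(d+1)/j)} · ∫_{k+d/j}^{k+(d+1)/j} P_k · p_k^{t−k} · log(1/p_k) dt + ∑_{d=0}^{n₁−1} ν^{m(n+l+(d+1)/j)} · ∫_{n+l+d/j}^{n+l+(d+1)/j} P_{n+l} · p_{n+l}^{t−(n+l)} · log(1/p_{n+l}) dt = ∑_{k=l}^{n+l−1} ν^{m·k} · P_k · (1 − p_k^{1/j}) · ∑_{d=n₁}^{j−1} ν^{(d+1)m/j} · p_k^{d/j} + ν^{(n+l)m} · P_{n+l} · (1 − p_{n+l}^{1/j}) · ∑_{d=0}^{n₁−1} ν^{(d+1)m/j} · p_{n+l}^{d/j}. (This is the m-th moment of ν^{(⌊T_x·j⌋+1)/j} restricted to {l + n₁/j ≤ T_x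 < n + l + n₁/j} under the constant force of mortality assumption.) -/
open Real Finset

lemma aux_hasDerivAt (p c t : ℝ) (hp : 0 < p) :
    HasDerivAt (fun s => -(p ^ (s - c))) (p ^ (t - c) * Real.log (1 / p)) t := by
  have h1 : HasDerivAt (fun s : ℝ => s - c) 1 t := (hasDerivAt_id t).sub_const c
  have h2 := (Real.hasStrictDerivAt_const_rpow hp (t - c)).hasDerivAt
  have h : HasDerivAt (fun s : ℝ => p ^ (s - c)) (p ^ (t - c) * Real.log p) t := by
    have h3 := h2.comp t h1
    rw [mul_one] at h3
    exact h3
  have := h.neg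
  have hlog : Real.log (1 / p) = -Real.log p := by
    rw [one_div, Real.log_inv]
  rw [hlog]
  rw [mul_neg]
  exact this

lemma aux_integral (p c a b : ℝ) (hp : 0 < p) :
    (∫ t in a..b, p ^ (t - c) * Real.log (1 / p)) = p ^ (a - c) - p ^ (b - c) := by
  have hcont : Continuous fun t : ℝ => p ^ (t - c) * Real.log (1 / p) := by
    have : Continuous fun t : ℝ => Real.exp (Real.log p * (t - c)) * Real.log (1 / p) := by
      continuity
    simpa [Real.rpow_def_of_pos hp] using this
  have := intervalIntegral.integral_eq_sub_of_hasDerivAt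
    (f := fun s => -(p ^ (s - c))) (f' := fun t => p ^ (t - c) * Real.log (1 / p))
    (fun t _ => aux_hasDerivAt p c t hp) (hcont.intervalIntegrable a b)
  rw [this]; ring

lemma aux_term (ν p P K D M J : ℝ) (hν : 0 < ν) (hp : 0 < p) :
    ν ^ (M * (K + (D + 1) / J)) *
      ∫ t in (K + D / J)..(K + (D + 1) / J), P * p ^ (t - K) * Real.log (1 / p)
    = ν ^ (M * K) * P * (1 - p ^ (1 / J)) * (ν ^ ((D + 1) * M / J) * p ^ (D / J)) := by
  have hint : (∫ t in (K + D / J)..(K + (D + 1) / J), P * p ^ (t - K) * Real.log (1 / p))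
      = P * (p ^ (D / J) - p ^ ((D + 1) / J)) := by
    simp_rw [mul_assoc]
    rw [intervalIntegral.integral_const_mul, aux_integral p K _ _ hp,
      show K + D / J - K = D / J by ring, show K + (D + 1) / J - K = (D + 1) / J by ring]
  rw [hint]
  have h1 : ν ^ (M * (K + (D + 1) / J)) = ν ^ (M * K) * ν ^ ((D + 1) * M / J) := by
    rw [← Real.rpow_add hν]; congr 1; ring
  have h2 : p ^ ((D + 1) / J) = p ^ (D / J) * p ^ (1 / J) := by
    rw [← Real.rpow_add hp]; congr 1; ring
  rw [h1, h2]; ring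

/-- m-th moment of ν^{(⌊T_x·j⌋+1)/j} restricted to
{l + n₁/j ≤ T_x < n + l + n₁/j} under the constant force of mortality assumption. -/
theorem moment_mthly_insurance
    (p : ℕ → ℝ) (ν : ℝ) (hν : ν ∈ Set.Ioo (0 : ℝ) 1)
    (j n m l n₁ : ℕ) (hj : 1 ≤ j) (hn : 1 ≤ n) (hn₁ : n₁ < j)
    (hp : ∀ k, l ≤ k → k ≤ l + n → 0 < p k ∧ p k < 1) :
    (∑ k ∈ Finset.Ico l (n + l), ∑ d ∈ Finset.Ico n₁ j,
        ν ^ ((m : ℝ) * ((k : ℝ) + ((d : ℝ) + 1) / (j : ℝ))) *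
          ∫ t in ((k : ℝ) + (d : ℝ) / (j : ℝ))..((k : ℝ) + ((d : ℝ) + 1) / (j : ℝ)),
            (∏ i ∈ Finset.range k, p i) * p k ^ (t - (k : ℝ)) * Real.log (1 / p k))
      + ∑ d ∈ Finset.range n₁,
          ν ^ ((m : ℝ) * (((n : ℝ) + (l : ℝ)) + ((d : ℝ) + 1) / (j : ℝ))) *
            ∫ t in (((n : ℝ) + (l : ℝ)) + (d : ℝ) / (j : ℝ))..
                (((n : ℝ) + (l : ℝ)) + ((d : ℝ) + 1) / (j : ℝ)),
              (∏ i ∈ Finset.range (n + l), p i) *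
                p (n + l) ^ (t - ((n : ℝ) + (l : ℝ))) * Real.log (1 / p (n + l))
    = (∑ k ∈ Finset.Ico l (n + l),
        ν ^ ((m : ℝ) * (k : ℝ)) * (∏ i ∈ Finset.range k, p i) *
          (1 - p k ^ ((1 : ℝ) / (j : ℝ))) *
          ∑ d ∈ Finset.Ico n₁ j,
            ν ^ (((d : ℝ) + 1) * (m : ℝ) / (j : ℝ)) * p k ^ ((d : ℝ) / (j : ℝ)))
      + ν ^ (((n : ℝ) + (l : ℝ)) * (m : ℝ)) * (∏ i ∈ Finset.range (n + l), p i) *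
          (1 - p (n + l) ^ ((1 : ℝ) / (j : ℝ))) *
          ∑ d ∈ Finset.range n₁,
            ν ^ (((d : ℝ) + 1) * (m : ℝ) / (j : ℝ)) *
              p (n + l) ^ ((d : ℝ) / (j : ℝ)) := by
  obtain ⟨hν0, hν1⟩ := hν
  congr 1
  · refine Finset.sum_congr rfl fun k hk => ?_
    obtain ⟨hk1, hk2⟩ := Finset.mem_Ico.mp hk
    obtain ⟨hp0, _⟩ := hp k hk1 (by omega)
    rw [Finset.mul_sum]
    refine Finset.sum_congr rfl fun d _ => ?_
    exact aux_term ν (p k) _ (k : ℝ) (d : ℝ) (m : ℝ) (j : ℝ) hν0 hp0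
  · obtain ⟨hp0, _⟩ := hp (n + l) (by omega) (by omega)
    rw [show ((n : ℝ) + (l : ℝ)) * (m : ℝ) = (m : ℝ) * ((n : ℝ) + (l : ℝ)) by ring,
      Finset.mul_sum]
    refine Finset.sum_congr rfl fun d _ => ?_
    exact aux_term ν (p (n + l)) _ ((n : ℝ) + (l : ℝ)) (d : ℝ) (m : ℝ) (j : ℝ) hν0 hp0
end

section
/- Let j ≥ 1, n ≥ 1, m ∈ ℕ, l ∈ ℕ, n₁ ∈ {0, 1, …, j−1}, ν ∈ (0,1), and suppose 0 < p_k < 1 for all l ≤ k ≤ l+n. Then ∑_{k=l}^{n+l−1} ∑_{d=n₁}^{j−1} (d + j·k + 1)^m · ∫_{k+d/j}^{k+(d+1)/j} ν^{m·t} · P_k · p_k^{t−k} · log(1/p_k) dt + ∑_{d=0}^{n₁−1} (d + j·(n+l) + 1)^m · ∫_{n+l+d/j}^{n+l+(d+1)/j} ν^{m·t} · P_{n+l} · p_{n+l}^{t−(n+l)} · log(1/p_{n+l}) dt = ∑_{k=l}^{n+l−1} (P_k · ν^{m·k} · log(p_k) / log(ν^m·p_k)) · (1 − ν^{m/j}·p_k^{1/j})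 · ∑_{d=n₁}^{j−1} (d + j·k + 1)^m · ν^{d·m/j} · p_k^{d/j} + (ν^{(n+l)m} · P_{n+l} · log(p_{n+l}) · (1 − p_{n+l}^{1/j}·ν^{m/j}) / log(ν^m·p_{n+l})) · ∑_{d=0}^{n₁−1} (d + j·(n+l) + 1)^m · ν^{d·m/j} · p_{n+l}^{d/j}. (This is the m-th moment of (⌊j·T_x⌋+1)·ν^{T_x} restricted to {l + n₁/j ≤ T_x < n + l + n₁/j} under the constant force of mortality assumption.) -/
open Real Finset

lemma int_exp_mul (c a b : ℝ) (hc : c ≠ 0) :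
    ∫ t in a..b, Real.exp (c*t) = (Real.exp (c*b) - Real.exp (c*a))/c := by
  rw [intervalIntegral.integral_comp_mul_left (fun x => Real.exp x) hc, integral_exp]
  simp only [smul_eq_mul]
  field_simp

lemma key (ν p : ℝ) (hν0 : 0 < ν) (hν1 : ν < 1) (hp0 : 0 < p) (hp1 : p < 1)
    (m : ℕ) (J K D P : ℝ) :
    (∫ t in (K + D/J)..(K + (D+1)/J), ν ^ ((m:ℝ)*t) * (P * p ^ (t-K) * Real.log (1/p)))
    = P * ν ^ ((m:ℝ)*K) * Real.log p / Real.log (ν ^ (m:ℝ) * p) *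
        (1 - ν ^ ((m:ℝ)/J) * p ^ ((1:ℝ)/J)) * (ν ^ (D*(m:ℝ)/J) * p ^ (D/J)) := by
  set q := ν ^ (m:ℝ) * p with hq
  have hq0 : 0 < q := by positivity
  have hq1 : q < 1 := by
    have h1 : ν ^ (m:ℝ) ≤ 1 := Real.rpow_le_one hν0.le hν1.le (Nat.cast_nonneg m)
    have h2 : 0 < ν ^ (m:ℝ) := by positivity
    nlinarith
  have hlq : Real.log q < 0 := Real.log_neg hq0 hq1
  have hlq' : Real.log q = (m:ℝ) * Real.log ν + Real.log p := by
    rw [hq, Real.log_mul (by positivity) hp0.ne', Real.log_rpow hν0]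
  have hfun : ∀ t : ℝ, ν ^ ((m:ℝ)*t) * (P * p ^ (t-K) * Real.log (1/p))
      = (P * Real.log (1/p) * Real.exp (Real.log p * (-K))) * Real.exp (Real.log q * t) := by
    intro t
    rw [Real.rpow_def_of_pos hν0, Real.rpow_def_of_pos hp0, hlq']
    have h1 : Real.exp (Real.log ν * ((m:ℝ)*t)) * Real.exp (Real.log p * (t-K))
        = Real.exp (Real.log p * (-K)) * Real.exp (((m:ℝ)*Real.log ν + Real.log p) * t) := by
      rw [← Real.exp_add, ← Real.exp_add]; congr 1; ring
    linear_combination (P * Real.log (1/p)) * h1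
  simp only [hfun]
  rw [intervalIntegral.integral_const_mul, int_exp_mul _ _ _ hlq.ne]
  rw [← Real.rpow_def_of_pos hq0, ← Real.rpow_def_of_pos hq0, ← Real.rpow_def_of_pos hp0]
  have e1 : ν ^ ((m:ℝ)/J) * p ^ ((1:ℝ)/J) = q ^ ((1:ℝ)/J) := by
    rw [hq, Real.mul_rpow (by positivity) hp0.le, ← Real.rpow_mul hν0.le]
    ring_nf
  have e2 : ν ^ (D*(m:ℝ)/J) * p ^ (D/J) = q ^ (D/J) := by
    rw [hq, Real.mul_rpow (by positivity) hp0.le, ← Real.rpow_mul hν0.le]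
    ring_nf
  have h4 : q^(K+(D+1)/J) = q^K * q^(D/J) * q^((1:ℝ)/J) := by
    rw [← Real.rpow_add hq0, ← Real.rpow_add hq0]; congr 1; ring
  have h5 : q^(K+D/J) = q^K * q^(D/J) := by
    rw [← Real.rpow_add hq0]
  have h6 : p^(-K) * q^K = ν^((m:ℝ)*K) := by
    rw [hq, Real.mul_rpow (by positivity) hp0.le, ← Real.rpow_mul hν0.le,
      ← mul_assoc]
    rw [mul_comm (p^(-K)), mul_assoc, ← Real.rpow_add hp0]
    simp
  have h7 : Real.log (1/p) = -Real.log p := by rw [one_div, Real.log_inv]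
  rw [e1, e2, h4, h5, h7]
  linear_combination (P * Real.log p * q^(D/J) * (1 - q^((1:ℝ)/J)) * (Real.log q)⁻¹) * h6
/-- m-th moment of (⌊j·T_x⌋+1)·ν^{T_x} restricted to
{l + n₁/j ≤ T_x < n + l + n₁/j} under the constant force of mortality assumption. -/
theorem moment_mthly_increasing_insurance
    (p : ℕ → ℝ) (ν : ℝ) (hν : ν ∈ Set.Ioo (0 : ℝ) 1)
    (j n m l n₁ : ℕ) (hj : 1 ≤ j) (hn : 1 ≤ n) (hn₁ : n₁ < j)
    (hp : ∀ k, l ≤ k → k ≤ l + n → 0 < p k ∧ p k < 1) :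
    (∑ k ∈ Finset.Ico l (n + l), ∑ d ∈ Finset.Ico n₁ j,
        ((d : ℝ) + (j : ℝ) * (k : ℝ) + 1) ^ m *
          ∫ t in ((k : ℝ) + (d : ℝ) / (j : ℝ))..((k : ℝ) + ((d : ℝ) + 1) / (j : ℝ)),
            ν ^ ((m : ℝ) * t) *
              ((∏ i ∈ Finset.range k, p i) * p k ^ (t - (k : ℝ)) * Real.log (1 / p k)))
      + ∑ d ∈ Finset.range n₁,
          ((d : ℝ) + (j : ℝ) * ((n : ℝ) + (l : ℝ)) + 1) ^ m *
            ∫ t in (((n : ℝ) + (l : ℝ)) + (d : ℝ) / (j : ℝ))..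
                (((n : ℝ) + (l : ℝ)) + ((d : ℝ) + 1) / (j : ℝ)),
              ν ^ ((m : ℝ) * t) *
                ((∏ i ∈ Finset.range (n + l), p i) *
                  p (n + l) ^ (t - ((n : ℝ) + (l : ℝ))) * Real.log (1 / p (n + l)))
    = (∑ k ∈ Finset.Ico l (n + l),
        (∏ i ∈ Finset.range k, p i) * ν ^ ((m : ℝ) * (k : ℝ)) *
          Real.log (p k) / Real.log (ν ^ (m : ℝ) * p k) *
          (1 - ν ^ ((m : ℝ) / (j : ℝ)) * p k ^ ((1 : ℝ) / (j : ℝ))) *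
          ∑ d ∈ Finset.Ico n₁ j,
            ((d : ℝ) + (j : ℝ) * (k : ℝ) + 1) ^ m *
              ν ^ ((d : ℝ) * (m : ℝ) / (j : ℝ)) * p k ^ ((d : ℝ) / (j : ℝ)))
      + (ν ^ (((n : ℝ) + (l : ℝ)) * (m : ℝ)) * (∏ i ∈ Finset.range (n + l), p i) *
          Real.log (p (n + l)) *
          (1 - p (n + l) ^ ((1 : ℝ) / (j : ℝ)) * ν ^ ((m : ℝ) / (j : ℝ))) /
          Real.log (ν ^ (m : ℝ) * p (n + l))) *
          ∑ d ∈ Finset.range n₁,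
            ((d : ℝ) + (j : ℝ) * ((n : ℝ) + (l : ℝ)) + 1) ^ m *
              ν ^ ((d : ℝ) * (m : ℝ) / (j : ℝ)) *
              p (n + l) ^ ((d : ℝ) / (j : ℝ)) := by
  obtain ⟨hν0, hν1⟩ := hν
  congr 1
  · refine Finset.sum_congr rfl fun k hk => ?_
    obtain ⟨hk1, hk2⟩ := Finset.mem_Ico.mp hk
    obtain ⟨hp0, hp1⟩ := hp k hk1 (by omega)
    rw [Finset.mul_sum]
    refine Finset.sum_congr rfl fun d hd => ?_
    rw [key ν (p k) hν0 hν1 hp0 hp1 m (j:ℝ) (k:ℝ) (d:ℝ) _]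
    ring
  · obtain ⟨hp0, hp1⟩ := hp (n + l) (by omega) (by omega)
    rw [Finset.mul_sum]
    refine Finset.sum_congr rfl fun d hd => ?_
    rw [key ν (p (n+l)) hν0 hν1 hp0 hp1 m (j:ℝ) ((n:ℝ)+(l:ℝ)) (d:ℝ) _]
    rw [show ((n:ℝ)+(l:ℝ))*(m:ℝ) = (m:ℝ)*((n:ℝ)+(l:ℝ)) from mul_comm _ _]
    ring
end

section
/- Let m ≥ 1, l ∈ ℕ, n ≥ 1, ν ∈ (0,1), and suppose 0 < p_k < 1 for all l ≤ k ≤ l+n−1. Then ∑_{k=l}^{l+n−1} ∫_k^{k+1} (ν^t·(n + l − k))^m · P_k · p_k^{t−k} · log(1/p_k) dt = ∑_{k=l}^{l+n−1} (n + l − k)^m · ν^{m·k} · P_k · log(1/p_k) · (p_k·ν^m − 1) / log(ν^m·p_k). (Since ⌊T_x⌋ = k on [k, k+1), this is the m-th moment of the present value ν^{T_x}·(n + l − ⌊T_x⌋) of a yearly decreasing insured amount, restricted to {l ≤ T_x < l+n}, under the constant force of mortality assumption.) -/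
open Real Finset

open intervalIntegral in
lemma int_rpow_base (b : ℝ) (hb : 0 < b) (hb1 : b ≠ 1) (a : ℝ) :
    ∫ t in a..(a + 1), b ^ t = b ^ a * (b - 1) / Real.log b := by
  have hlog : Real.log b ≠ 0 := Real.log_ne_zero_of_pos_of_ne_one hb hb1
  have hcong : (∫ t in a..(a + 1), b ^ t)
      = ∫ t in a..(a + 1), Real.exp (Real.log b * t) := by
    apply intervalIntegral.integral_congr
    intro t _
    rw [Real.rpow_def_of_pos hb]
  rw [hcong, integral_comp_mul_left (fun x => Real.exp x) hlog, integral_exp,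
    smul_eq_mul]
  rw [← Real.rpow_def_of_pos hb, ← Real.rpow_def_of_pos hb,
    Real.rpow_add hb, Real.rpow_one]
  field_simp

/-- m-th moment of the present value ν^{T_x}·(n+l−⌊T_x⌋) of a yearly
decreasing insured amount, restricted to {l ≤ T_x < l+n}, under the constant force
of mortality assumption. -/
theorem moment_yearly_decreasing_insurance
    (p : ℕ → ℝ) (ν : ℝ) (hν : ν ∈ Set.Ioo (0 : ℝ) 1)
    (m l n : ℕ) (hm : 1 ≤ m) (hn : 1 ≤ n)
    (hp : ∀ k, l ≤ k → k < l + n → 0 < p k ∧ p k < 1) :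
    ∑ k ∈ Finset.Ico l (l + n),
      ∫ t in (k : ℝ)..((k : ℝ) + 1),
        (ν ^ t * ((n : ℝ) + (l : ℝ) - (k : ℝ))) ^ m *
          ((∏ i ∈ Finset.range k, p i) * p k ^ (t - (k : ℝ)) * Real.log (1 / p k))
    = ∑ k ∈ Finset.Ico l (l + n),
        ((n : ℝ) + (l : ℝ) - (k : ℝ)) ^ m * ν ^ ((m : ℝ) * (k : ℝ)) *
          (∏ i ∈ Finset.range k, p i) * Real.log (1 / p k) *
          (p k * ν ^ (m : ℝ) - 1) / Real.log (ν ^ (m : ℝ) * p k) := by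
  obtain ⟨hν0, hν1⟩ := hν
  refine Finset.sum_congr rfl fun k hk => ?_
  obtain ⟨hk1, hk2⟩ := Finset.mem_Ico.mp hk
  obtain ⟨hp0, hp1⟩ := hp k hk1 hk2
  set c : ℝ := (n : ℝ) + (l : ℝ) - (k : ℝ) with hc_def
  set P : ℝ := ∏ i ∈ Finset.range k, p i with hP_def
  set L : ℝ := Real.log (1 / p k) with hL_def
  have hνm : (0:ℝ) < ν ^ (m : ℝ) := Real.rpow_pos_of_pos hν0 _
  have hνm1 : ν ^ (m : ℝ) < 1 :=
    Real.rpow_lt_one hν0.le hν1 (by positivity)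
  set b : ℝ := ν ^ (m : ℝ) * p k with hb_def
  have hb0 : 0 < b := mul_pos hνm hp0
  have hb1 : b < 1 := by
    calc b < 1 * 1 := mul_lt_mul' hνm1.le hp1 hp0.le one_pos
      _ = 1 := by ring
  have hlogb : Real.log b ≠ 0 := Real.log_ne_zero_of_pos_of_ne_one hb0 (ne_of_lt hb1)
  have hpt : ∀ t : ℝ,
      (ν ^ t * c) ^ m * (P * p k ^ (t - (k : ℝ)) * L)
        = (c ^ m * P * L * (p k ^ k)⁻¹) * b ^ t := by
    intro t
    have h1 : (ν ^ t) ^ m = (ν ^ (m : ℝ)) ^ t := by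
      rw [← Real.rpow_natCast (ν ^ t) m, ← Real.rpow_mul hν0.le,
        mul_comm t (m : ℝ), Real.rpow_mul hν0.le]
    have h2 : p k ^ (t - (k : ℝ)) = p k ^ t * (p k ^ k)⁻¹ := by
      rw [← Real.rpow_natCast (p k) k, ← Real.rpow_neg hp0.le,
        ← Real.rpow_add hp0]
      ring_nf
    have h3 : b ^ t = (ν ^ (m : ℝ)) ^ t * p k ^ t :=
      Real.mul_rpow hνm.le hp0.le
    rw [mul_pow, h1, h2, h3]
    ring
  have hint : (∫ t in (k : ℝ)..((k : ℝ) + 1),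
      (ν ^ t * c) ^ m * (P * p k ^ (t - (k : ℝ)) * L))
      = (c ^ m * P * L * (p k ^ k)⁻¹) * (b ^ (k : ℝ) * (b - 1) / Real.log b) := by
    rw [intervalIntegral.integral_congr fun t _ => hpt t,
      intervalIntegral.integral_const_mul, int_rpow_base b hb0 (ne_of_lt hb1)]
  rw [hint]
  have hbk : b ^ (k : ℝ) = ν ^ ((m : ℝ) * (k : ℝ)) * p k ^ k := by
    rw [hb_def, Real.mul_rpow hνm.le hp0.le, ← Real.rpow_mul hν0.le,
      Real.rpow_natCast]
  rw [hbk, hb_def]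
  have hpk0 : (p k : ℝ) ^ k ≠ 0 := pow_ne_zero _ (ne_of_gt hp0)
  have h1 : p k ^ k * (p k ^ k)⁻¹ = 1 := mul_inv_cancel₀ hpk0
  linear_combination (c ^ m * P * L * ν ^ ((m : ℝ) * (k : ℝ)) *
    (ν ^ (m : ℝ) * p k - 1) / Real.log (ν ^ (m : ℝ) * p k)) * h1
end
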